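/- For every compact operator K ∈ L(H) and linear operators A, B in H with dom(A) ⊆ dom(B), W_e(A + K, B) = W_e(A, B). -/

import Mathlib

open Filter Topology

variable {H : Type*} [NormedAddCommGroup H] [InnerProductSpace ℂ H] [CompleteSpace H]

/-- The numerical range of (the restriction to the domain `d` of) a linear operator `T`. -/
def numRange (T : H →ₗ[ℂ] H) (d : Submodule ℂ H) : Set ℂ :=
  {z | ∃ x ∈ d, ‖x‖ = 1 ∧ z = (inner ℂ (T x) x : ℂ)}

/-- The pencil numerical range `W(A,B) = {λ : 0 ∈ closure (W(A - λB))}`. -/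
def pencilW (A B : H →ₗ[ℂ] H) (dA : Submodule ℂ H) : Set ℂ :=
  {lam : ℂ | (0 : ℂ) ∈ closure (numRange (A - lam • B) dA)}

/-- The pencil numerical range `w(A,B) = {⟨Ax,x⟩/⟨Bx,x⟩ : x ∈ dom A, ⟨Bx,x⟩ ≠ 0}`. -/
def pencilw (A B : H →ₗ[ℂ] H) (dA : Submodule ℂ H) : Set ℂ :=
  {lam : ℂ | ∃ x ∈ dA, (inner ℂ (B x) x : ℂ) ≠ 0 ∧
    lam = (inner ℂ (A x) x : ℂ) / (inner ℂ (B x) x : ℂ)}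

/-- The essential numerical range of an operator `T` with domain `d`, via weakly null
normalized sequences. -/
def essNumRange (T : H →ₗ[ℂ] H) (d : Submodule ℂ H) : Set ℂ :=
  {z | ∃ x : ℕ → H, (∀ n, x n ∈ d) ∧ (∀ n, ‖x n‖ = 1) ∧
    (∀ y : H, Tendsto (fun n => (inner ℂ y (x n) : ℂ)) atTop (𝓝 0)) ∧
    Tendsto (fun n => (inner ℂ (T (x n)) (x n) : ℂ)) atTop (𝓝 z)}

/-- The pencil essential numerical range `W_e(A,B) = {λ : 0 ∈ W_e(A - λB)}`. -/
def pencilWe (A B : H →ₗ[ℂ] H) (dA : Submodule ℂ H) : Set ℂ :=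
  {lam : ℂ | (0 : ℂ) ∈ essNumRange (A - lam • B) dA}

/-- The pencil essential numerical range `w_e(A,B)`. -/
def pencilwe (A B : H →ₗ[ℂ] H) (dA : Submodule ℂ H) : Set ℂ :=
  {lam : ℂ | ∃ x : ℕ → H, (∀ n, x n ∈ dA) ∧ (∀ n, ‖x n‖ = 1) ∧
    (∀ y : H, Tendsto (fun n => (inner ℂ y (x n) : ℂ)) atTop (𝓝 0)) ∧
    (∀ n, (inner ℂ (B (x n)) (x n) : ℂ) ≠ 0) ∧
    Tendsto (fun n => (inner ℂ (A (x n)) (x n) : ℂ) / (inner ℂ (B (x n)) (x n) : ℂ))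
      atTop (𝓝 lam)}


open Pointwise in
lemma compact_apply_tendsto (K : H →L[ℂ] H) (hK : IsCompactOperator K)
    (x : ℕ → H) (hb : ∀ n, ‖x n‖ = 1)
    (hw : ∀ y : H, Tendsto (fun n => (inner ℂ y (x n) : ℂ)) atTop (𝓝 0)) :
    Tendsto (fun n => K (x n)) atTop (𝓝 0) := by
  obtain ⟨S, hScomp, hSmem⟩ := hK
  obtain ⟨ε, hε, hball⟩ := Metric.mem_nhds_iff.mp hSmem
  have hxmem : ∀ n, K (x n) ∈ (((ε/2:ℝ):ℂ))⁻¹ • S := by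
    intro n
    have h1 : (((ε/2:ℝ):ℂ)) • x n ∈ Metric.ball (0 : H) ε := by
      simp [norm_smul, hb n, Complex.norm_real, abs_of_pos (half_pos hε)]
      rw [abs_of_pos hε]; linarith
    have h2 : K ((((ε/2:ℝ):ℂ)) • x n) ∈ S := hball h1
    refine ⟨K ((((ε/2:ℝ):ℂ)) • x n), h2, ?_⟩
    rw [map_smul]
    show (((ε/2:ℝ):ℂ))⁻¹ • (((ε/2:ℝ):ℂ)) • K (x n) = K (x n)
    rw [smul_smul, inv_mul_cancel₀ (by exact_mod_cast (by positivity : (ε/2:ℝ) ≠ 0)), one_smul]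
  have hS'comp : IsCompact ((((ε/2:ℝ):ℂ))⁻¹ • S) := hScomp.smul _
  -- weak convergence of K (x n) to 0
  have hweak : ∀ y : H, Tendsto (fun n => (inner ℂ y (K (x n)) : ℂ)) atTop (𝓝 0) := by
    intro y
    have : (fun n => (inner ℂ y (K (x n)) : ℂ))
        = fun n => (inner ℂ ((ContinuousLinearMap.adjoint K) y) (x n) : ℂ) := by
      funext n; rw [ContinuousLinearMap.adjoint_inner_left]
    rw [this]; exact hw _
  apply tendsto_of_subseq_tendsto
  intro ns hns
  obtain ⟨a, haS, φ, hφmono, hφtend⟩ :=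
    hS'comp.tendsto_subseq (x := fun k => K (x (ns k))) (fun k => hxmem (ns k))
  have ha : a = 0 := by
    have h1 : Tendsto (fun k => (inner ℂ a (K (x (ns (φ k)))) : ℂ)) atTop (𝓝 (inner ℂ a a)) :=
      (tendsto_const_nhds.inner hφtend)
    have h2 : Tendsto (fun k => (inner ℂ a (K (x (ns (φ k)))) : ℂ)) atTop (𝓝 0) :=
      (hweak a).comp ((hns.comp hφmono.tendsto_atTop))
    have := tendsto_nhds_unique h1 h2
    rwa [inner_self_eq_zero] at this
  exact ⟨φ, ha ▸ hφtend⟩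

lemma compact_inner_tendsto (K : H →L[ℂ] H) (hK : IsCompactOperator K)
    (x : ℕ → H) (hb : ∀ n, ‖x n‖ = 1)
    (hw : ∀ y : H, Tendsto (fun n => (inner ℂ y (x n) : ℂ)) atTop (𝓝 0)) :
    Tendsto (fun n => (inner ℂ (K (x n)) (x n) : ℂ)) atTop (𝓝 0) := by
  have hKx := compact_apply_tendsto K hK x hb hw
  refine squeeze_zero_norm (fun n => ?_) (tendsto_zero_iff_norm_tendsto_zero.mp hKx)
  calc ‖(inner ℂ (K (x n)) (x n) : ℂ)‖ ≤ ‖K (x n)‖ * ‖x n‖ := norm_inner_le_norm _ _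
  _ = ‖K (x n)‖ := by rw [hb n, mul_one]

lemma ess_sub (T : H →ₗ[ℂ] H) (d : Submodule ℂ H) (K : H →L[ℂ] H)
    (hK : IsCompactOperator K) {z : ℂ} (hz : z ∈ essNumRange T d) :
    z ∈ essNumRange (T + (K : H →ₗ[ℂ] H)) d := by
  obtain ⟨x, hd, hb, hw, ht⟩ := hz
  refine ⟨x, hd, hb, hw, ?_⟩
  have hKi := compact_inner_tendsto K hK x hb hw
  have : (fun n => (inner ℂ ((T + (K : H →ₗ[ℂ] H)) (x n)) (x n) : ℂ))
      = fun n => (inner ℂ (T (x n)) (x n) : ℂ) + (inner ℂ (K (x n)) (x n) : ℂ) := by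
    funext n; simp [inner_add_left]
  rw [this]
  simpa using ht.add hKi

/-- `W_e(A + K, B) = W_e(A, B)` for every compact `K ∈ L(H)`. -/
theorem stmt_13 (A B : H →ₗ[ℂ] H) (dA dB : Submodule ℂ H) (hAB : dA ≤ dB)
    (K : H →L[ℂ] H) (hK : IsCompactOperator K) :
    pencilWe (A + (K : H →ₗ[ℂ] H)) B dA = pencilWe A B dA := by
  ext lam
  constructor
  · intro h
    have h' := ess_sub ((A + (K : H →ₗ[ℂ] H)) - lam • B) dA (-K) hK.neg h
    have heq : ((A + (K : H →ₗ[ℂ] H)) - lam • B) + ((-K : H →L[ℂ] H) : H →ₗ[ℂ] H)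
        = A - lam • B := by ext v; simp; abel
    rwa [pencilWe, Set.mem_setOf_eq, ← heq]
  · intro h
    have h' := ess_sub (A - lam • B) dA K hK h
    have heq : (A - lam • B) + (K : H →ₗ[ℂ] H)
        = (A + (K : H →ₗ[ℂ] H)) - lam • B := by ext v; simp; abel
    rwa [pencilWe, Set.mem_setOf_eq, ← heq]
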